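/- (Tallis moment formula) Let (Q, Q^S, Q^H) be trivariate normal with zero means, unit variances, Corr(Q,Q^S)=θ^S, Corr(Q,Q^H)=θ^H, Corr(Q^S,Q^H)=θ with the covariance matrix positive definite. Then E[Q | Q^S > τ^S, Q^H > τ^H] = [θ^S φ(τ^S) Φ̄((τ^H − θτ^S)/√(1−θ²)) + θ^H φ(τ^H) Φ̄((τ^S − θτ^H)/√(1−θ²))] / Φ̄₂(τ^S, τ^H; θ). -/

import Mathlib

open Real MeasureTheory Set Matrix

/-- standard normal density -/
noncomputable def phi (x : ℝ) : ℝ := Real.exp (-x^2/2) / Real.sqrt (2*Real.pi)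

/-- standard normal CDF -/
noncomputable def Phi (x : ℝ) : ℝ := ∫ t in Set.Iic x, phi t

/-- standard normal survival function -/
noncomputable def PhiBar (x : ℝ) : ℝ := ∫ t in Set.Ioi x, phi t

/-- standard bivariate normal density with correlation ρ -/
noncomputable def phi2 (x y ρ : ℝ) : ℝ :=
  Real.exp (-(x^2 - 2*ρ*x*y + y^2)/(2*(1-ρ^2))) / (2*Real.pi*Real.sqrt (1-ρ^2))

/-- standard bivariate normal CDF with correlation ρ -/
noncomputable def Phi2 (a b ρ : ℝ) : ℝ := ∫ x in Set.Iic a, ∫ y in Set.Iic b, phi2 x y ρ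

/-- standard bivariate normal joint survival function with correlation ρ -/
noncomputable def PhiBar2 (a b ρ : ℝ) : ℝ := ∫ x in Set.Ioi a, ∫ y in Set.Ioi b, phi2 x y ρ

/-- covariance matrix of (Q, Q^S, Q^H) -/
noncomputable def covM (θS θH θ : ℝ) : Matrix (Fin 3) (Fin 3) ℝ :=
  !![1, θS, θH; θS, 1, θ; θH, θ, 1]

/-- trivariate normal density of (Q, Q^S, Q^H) with zero means, unit variances and
correlations θS = Corr(Q,Q^S), θH = Corr(Q,Q^H), θ = Corr(Q^S,Q^H) -/
noncomputable def pdf3 (θS θH θ : ℝ) (v : Fin 3 → ℝ) : ℝ :=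
  Real.exp (-(v ⬝ᵥ ((covM θS θH θ)⁻¹ *ᵥ v))/2) /
    Real.sqrt ((2*Real.pi)^3 * (covM θS θH θ).det)

section TallisAux
open Real MeasureTheory Set Filter Matrix

noncomputable def gauss (v x : ℝ) : ℝ := Real.exp (-x^2/(2*v)) / Real.sqrt (2*Real.pi*v)

lemma gauss_nonneg {v : ℝ} (x : ℝ) : 0 ≤ gauss v x := by
  unfold gauss; positivity

@[fun_prop]
lemma continuous_gauss (v : ℝ) : Continuous (gauss v) := by
  unfold gauss; fun_prop

lemma phi_eq_gauss (x : ℝ) : phi x = gauss 1 x := by simp [phi, gauss]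

/-- shift a set integral on Ioi -/
lemma setIntegral_Ioi_shift (f : ℝ → ℝ) (a m : ℝ) :
    ∫ x in Ioi a, f (x - m) = ∫ x in Ioi (a - m), f x := by
  have h := (MeasureTheory.measurePreserving_sub_right (volume : Measure ℝ) m).setIntegral_preimage_emb
    (MeasurableEquiv.subRight m).measurableEmbedding f (Ioi (a - m))
  simpa [preimage_sub_const_Ioi] using h

lemma gauss_comp_div {v : ℝ} (hv : 0 < v) (x : ℝ) :
    gauss v x = (Real.sqrt v)⁻¹ * gauss 1 (x / Real.sqrt v) := by
  unfold gauss
  have hsv : (0:ℝ) < Real.sqrt v := Real.sqrt_pos.2 hv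
  rw [div_pow, Real.sq_sqrt hv.le, Real.sqrt_mul (by positivity) v]
  rw [show -(x^2/v)/(2*1) = -x^2/(2*v) by ring]
  field_simp

/-- SCALE : integral of shifted/scaled gauss over Ioi -/
lemma setIntegral_gauss_Ioi {v : ℝ} (hv : 0 < v) (a m : ℝ) :
    ∫ x in Ioi a, gauss v (x - m) = PhiBar ((a - m) / Real.sqrt v) := by
  rw [setIntegral_Ioi_shift (fun x => gauss v x) a m]
  have hsv : (0:ℝ) < Real.sqrt v := Real.sqrt_pos.2 hv
  calc ∫ x in Ioi (a-m), gauss v x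
      = ∫ x in Ioi (a-m), (Real.sqrt v)⁻¹ • gauss 1 (x * (Real.sqrt v)⁻¹) := by
        refine setIntegral_congr_fun measurableSet_Ioi (fun x _ => ?_)
        rw [smul_eq_mul, ← div_eq_mul_inv x, ← gauss_comp_div hv]
    _ = (Real.sqrt v)⁻¹ • ∫ x in Ioi (a-m), gauss 1 (x * (Real.sqrt v)⁻¹) := by
        rw [integral_smul]
    _ = PhiBar ((a - m) / Real.sqrt v) := by
        rw [MeasureTheory.integral_comp_mul_right_Ioi (gauss 1) _ (inv_pos.2 hsv)]
        rw [PhiBar]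
        simp_rw [phi_eq_gauss, smul_smul, div_eq_mul_inv]
        rw [inv_inv, inv_mul_cancel₀ hsv.ne', one_smul]

lemma integrable_gauss' {v : ℝ} (hv : 0 < v) : Integrable (gauss v) := by
  have : gauss v = fun x => Real.exp (-(1/(2*v)) * x^2) * (Real.sqrt (2*Real.pi*v))⁻¹ := by
    funext x; rw [gauss, div_eq_mul_inv]; ring_nf
  rw [this]
  exact (integrable_exp_neg_mul_sq (by positivity)).mul_const _

lemma integrable_mul_gauss' {v : ℝ} (hv : 0 < v) : Integrable (fun x => x * gauss v x) := by
  have : (fun x => x * gauss v x)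
      = fun x => (x * Real.exp (-(1/(2*v)) * x^2)) * (Real.sqrt (2*Real.pi*v))⁻¹ := by
    funext x; rw [gauss, div_eq_mul_inv]; ring_nf
  rw [this]
  exact (integrable_mul_exp_neg_mul_sq (by positivity)).mul_const _

lemma hasDerivAt_gauss {v : ℝ} (hv : v ≠ 0) (x : ℝ) :
    HasDerivAt (gauss v) (-(x/v) * gauss v x) x := by
  have h1 : HasDerivAt (fun x : ℝ => -x^2/(2*v)) (-(x/v)) x := by
    have := ((hasDerivAt_pow 2 x).neg).div_const (2*v)
    refine this.congr_deriv ?_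
    field_simp; ring
  have h2 := (h1.exp).div_const (Real.sqrt (2*Real.pi*v))
  refine h2.congr_deriv ?_
  unfold gauss; field_simp

lemma tendsto_gauss_atTop {v : ℝ} (hv : 0 < v) : Tendsto (gauss v) atTop (nhds 0) := by
  have h1 : Tendsto (fun x : ℝ => -x^2/(2*v)) atTop atBot := by
    apply Tendsto.atBot_div_const (by positivity)
    exact tendsto_neg_atBot_iff.2 (tendsto_pow_atTop (by norm_num))
  have h2 := (Real.tendsto_exp_atBot.comp h1).div_const (Real.sqrt (2*Real.pi*v))
  rw [zero_div] at h2; exact h2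

lemma integral_Ioi_mul_gauss {v : ℝ} (hv : 0 < v) (t : ℝ) :
    ∫ x in Ioi t, x * gauss v x = v * gauss v t := by
  have hderiv : ∀ x ∈ Ici t, HasDerivAt (fun y => -v * gauss v y) (x * gauss v x) x := by
    intro x _
    have := (hasDerivAt_gauss hv.ne' x).const_mul (-v)
    refine this.congr_deriv ?_
    field_simp
  have hint : IntegrableOn (fun x => x * gauss v x) (Ioi t) :=
    (integrable_mul_gauss' hv).integrableOn
  have htend : Tendsto (fun y => -v * gauss v y) atTop (nhds 0) := by
    simpa using (tendsto_gauss_atTop hv).const_mul (-v)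
  have := MeasureTheory.integral_Ioi_of_hasDerivAt_of_tendsto' hderiv hint htend
  rw [this]; ring

lemma integral_Ioi_mul_gauss_sub {v : ℝ} (hv : 0 < v) (a m : ℝ) :
    ∫ x in Ioi a, x * gauss v (x - m)
      = m * PhiBar ((a - m) / Real.sqrt v) + v * gauss v (a - m) := by
  have key : ∀ x : ℝ, x * gauss v (x - m) = (x - m) * gauss v (x - m) + m * gauss v (x - m) := by
    intro x; ring
  simp_rw [key]
  rw [integral_add (((integrable_mul_gauss' hv).comp_sub_right m).integrableOn)
    ((((integrable_gauss' hv).comp_sub_right m).const_mul m).integrableOn)]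
  rw [setIntegral_Ioi_shift (fun y => y * gauss v y) a m, integral_Ioi_mul_gauss hv,
    MeasureTheory.integral_const_mul, setIntegral_gauss_Ioi hv]
  ring

lemma integrable_phi : Integrable phi := by
  have : phi = gauss 1 := funext phi_eq_gauss
  rw [this]; exact integrable_gauss' one_pos

lemma phi_nonneg (x : ℝ) : 0 ≤ phi x := by unfold phi; positivity

lemma integral_gauss {v : ℝ} (hv : 0 < v) : ∫ x, gauss v x = 1 := by
  have hg : gauss v = fun x => Real.exp (-(1/(2*v)) * x^2) * (Real.sqrt (2*Real.pi*v))⁻¹ := by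
    funext x; rw [gauss, div_eq_mul_inv]; ring_nf
  rw [hg, integral_mul_const, integral_gaussian]
  rw [← Real.sqrt_inv, ← Real.sqrt_mul (by positivity)]
  rw [show π / (1/(2*v)) * (2*π*v)⁻¹ = 1 by field_simp]
  simp

lemma integral_phi : ∫ x, phi x = 1 := by
  have h : phi = gauss 1 := funext phi_eq_gauss
  rw [h]; exact integral_gauss one_pos

lemma PhiBar_nonneg (x : ℝ) : 0 ≤ PhiBar x :=
  setIntegral_nonneg measurableSet_Ioi (fun t _ => phi_nonneg t)

lemma PhiBar_le_one (x : ℝ) : PhiBar x ≤ 1 := by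
  rw [← integral_phi]
  exact setIntegral_le_integral integrable_phi (ae_of_all _ phi_nonneg)

lemma PhiBar_eq (x : ℝ) : PhiBar x = 1 - ∫ t in Iic x, phi t := by
  have := intervalIntegral.integral_Iic_add_Ioi (b := x) integrable_phi.integrableOn
    integrable_phi.integrableOn
  rw [integral_phi] at this
  rw [PhiBar]; linarith

lemma hasDerivAt_PhiBar (x : ℝ) : HasDerivAt PhiBar (-phi x) x := by
  have hIic : ∀ y : ℝ, ∫ t in Iic y, phi t = (∫ t in Iic (0:ℝ), phi t) + ∫ t in (0:ℝ)..y, phi t := by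
    intro y
    rw [← intervalIntegral.integral_Iic_sub_Iic integrable_phi.integrableOn
      integrable_phi.integrableOn]
    ring
  have hcont : Continuous phi := by unfold phi; fun_prop
  have hd : HasDerivAt (fun y => ∫ t in (0:ℝ)..y, phi t) (phi x) x := by
    exact intervalIntegral.integral_hasDerivAt_right
      (integrable_phi.intervalIntegrable) (hcont.stronglyMeasurableAtFilter _ _)
      hcont.continuousAt
  have : HasDerivAt (fun y => 1 - ((∫ t in Iic (0:ℝ), phi t) + ∫ t in (0:ℝ)..y, phi t)) (-phi x) x := by
    simpa using ((hd.const_add (∫ t in Iic (0:ℝ), phi t)).const_sub 1)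
  apply this.congr_of_eventuallyEq
  filter_upwards with y
  rw [PhiBar_eq, hIic]

lemma continuous_PhiBar : Continuous PhiBar := by
  rw [continuous_iff_continuousAt]
  exact fun x => (hasDerivAt_PhiBar x).continuousAt

lemma gauss_prod {θ : ℝ} (hΔ : 0 < 1 - θ^2) (s b : ℝ) :
    gauss 1 s * gauss (1-θ^2) (b - θ*s) = gauss 1 b * gauss (1-θ^2) (s - θ*b) := by
  unfold gauss
  rw [div_mul_div_comm, div_mul_div_comm, ← Real.exp_add, ← Real.exp_add]
  congr 1
  field_simp
  ring

lemma gauss_one_div_sqrt {v : ℝ} (hv : 0 < v) (x : ℝ) :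
    gauss 1 (x / Real.sqrt v) = Real.sqrt v * gauss v x := by
  rw [gauss_comp_div hv x]
  field_simp

lemma integral_Ioi_mul_gauss_PhiBar {θ : ℝ} (hΔ : 0 < 1 - θ^2) (a b : ℝ) :
    ∫ s in Ioi a, s * gauss 1 s * PhiBar ((b - θ*s) / Real.sqrt (1-θ^2))
      = gauss 1 a * PhiBar ((b - θ*a) / Real.sqrt (1-θ^2))
        + θ * (gauss 1 b * PhiBar ((a - θ*b) / Real.sqrt (1-θ^2))) := by
  set c := Real.sqrt (1-θ^2) with hc
  have hcpos : 0 < c := Real.sqrt_pos.2 hΔ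
  set F : ℝ → ℝ := fun s => -gauss 1 s * PhiBar ((b - θ*s)/c) with hF
  -- pointwise identity for the correction term
  have hpt : ∀ s : ℝ, (θ/c) * (gauss 1 s * gauss 1 ((b - θ*s)/c))
      = θ * (gauss 1 b * gauss (1-θ^2) (s - θ*b)) := by
    intro s
    rw [gauss_one_div_sqrt hΔ, ← hc]
    rw [show gauss 1 s * (c * gauss (1-θ^2) (b - θ*s)) = c * (gauss 1 s * gauss (1-θ^2) (b - θ*s)) by ring]
    rw [gauss_prod hΔ]
    field_simp
  have hderiv : ∀ s ∈ Ici a, HasDerivAt F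
      (s * gauss 1 s * PhiBar ((b - θ*s)/c)
        - (θ/c) * (gauss 1 s * gauss 1 ((b - θ*s)/c))) s := by
    intro s _
    have hg : HasDerivAt (fun y => -gauss 1 y) (s * gauss 1 s) s := by
      have := (hasDerivAt_gauss one_ne_zero s).neg
      refine this.congr_deriv ?_; ring_nf
    have hu : HasDerivAt (fun y : ℝ => (b - θ*y)/c) (-θ/c) s := by
      have : HasDerivAt (fun y : ℝ => b - θ*y) (-θ) s := by
        simpa using ((hasDerivAt_id s).const_mul θ).const_sub b
      exact this.div_const c
    have hP : HasDerivAt (fun y => PhiBar ((b - θ*y)/c)) (-phi ((b - θ*s)/c) * (-θ/c)) s :=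
      (hasDerivAt_PhiBar _).comp s hu
    have := hg.mul hP
    refine this.congr_deriv ?_
    rw [phi_eq_gauss]
    ring
  have hint1 : IntegrableOn (fun s => s * gauss 1 s * PhiBar ((b - θ*s)/c)) (Ioi a) := by
    apply Integrable.mono' ((integrable_mul_gauss' one_pos).abs.integrableOn)
    · apply Continuous.aestronglyMeasurable
      exact ((continuous_id.mul (continuous_gauss 1)).mul
        (continuous_PhiBar.comp (by fun_prop)))
    · filter_upwards with s
      rw [norm_mul, norm_mul]
      have h1 : ‖PhiBar ((b - θ*s)/c)‖ ≤ 1 := by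
        rw [Real.norm_eq_abs, abs_le]
        exact ⟨by linarith [PhiBar_nonneg ((b - θ*s)/c)], PhiBar_le_one _⟩
      calc ‖s‖ * ‖gauss 1 s‖ * ‖PhiBar ((b - θ*s)/c)‖
          ≤ ‖s‖ * ‖gauss 1 s‖ * 1 := by
            apply mul_le_mul_of_nonneg_left h1 (by positivity)
        _ = |s * gauss 1 s| := by rw [mul_one, ← norm_mul, Real.norm_eq_abs]
  have hint2 : IntegrableOn (fun s => θ * (gauss 1 b * gauss (1-θ^2) (s - θ*b))) (Ioi a) :=
    ((((integrable_gauss' hΔ).comp_sub_right (θ*b)).const_mul (gauss 1 b)).const_mul θ).integrableOn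
  have hf'int : IntegrableOn (fun s => s * gauss 1 s * PhiBar ((b - θ*s)/c)
      - (θ/c) * (gauss 1 s * gauss 1 ((b - θ*s)/c))) (Ioi a) := by
    apply Integrable.sub hint1
    exact (integrable_congr (ae_of_all _ hpt)).2 hint2
  have htend : Tendsto F atTop (nhds 0) := by
    have hub : ∀ s : ℝ, F s ≤ 0 := fun s =>
      mul_nonpos_of_nonpos_of_nonneg (by simpa using gauss_nonneg (v := (1:ℝ)) s) (PhiBar_nonneg _)
    have hlb : ∀ s : ℝ, -gauss 1 s ≤ F s := by
      intro s
      rw [hF]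
      have := mul_le_of_le_one_right (gauss_nonneg (v := (1:ℝ)) s) (PhiBar_le_one ((b - θ*s)/c))
      nlinarith [gauss_nonneg (v := (1:ℝ)) s]
    have h1 : Tendsto (fun s => -gauss 1 s) atTop (nhds 0) := by
      simpa using (tendsto_gauss_atTop one_pos).neg
    exact tendsto_of_tendsto_of_tendsto_of_le_of_le h1 tendsto_const_nhds hlb hub
  have hFTC := MeasureTheory.integral_Ioi_of_hasDerivAt_of_tendsto' hderiv hf'int htend
  have hsplit : ∫ s in Ioi a, (s * gauss 1 s * PhiBar ((b - θ*s)/c)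
      - (θ/c) * (gauss 1 s * gauss 1 ((b - θ*s)/c)))
      = (∫ s in Ioi a, s * gauss 1 s * PhiBar ((b - θ*s)/c))
        - ∫ s in Ioi a, θ * (gauss 1 b * gauss (1-θ^2) (s - θ*b)) := by
    rw [integral_sub hint1 ((integrable_congr (ae_of_all _ hpt)).2 hint2)]
    congr 1
    exact setIntegral_congr_fun measurableSet_Ioi (fun s _ => hpt s)
  rw [hsplit] at hFTC
  have hcorr : ∫ s in Ioi a, θ * (gauss 1 b * gauss (1-θ^2) (s - θ*b))
      = θ * (gauss 1 b * PhiBar ((a - θ*b)/c)) := by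
    rw [MeasureTheory.integral_const_mul, MeasureTheory.integral_const_mul,
      setIntegral_gauss_Ioi hΔ]
  rw [hcorr] at hFTC
  have hFa : F a = -gauss 1 a * PhiBar ((b - θ*a)/c) := rfl
  rw [hFa] at hFTC
  linarith [hFTC]


lemma det_covM (θS θH θ : ℝ) :
    (covM θS θH θ).det = 1 + 2*(θS*θH*θ) - θS^2 - θH^2 - θ^2 := by
  simp [covM, Matrix.det_fin_three]
  ring

lemma theta_sq_lt_one {θS θH θ : ℝ} (hpd : (covM θS θH θ).PosDef) : θ^2 < 1 := by
  have h1 := hpd.dotProduct_mulVec_pos (x := ![0,1,-1]) (by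
    intro h; have := congrFun h 1; simp at this)
  have h2 := hpd.dotProduct_mulVec_pos (x := ![0,1,1]) (by
    intro h; have := congrFun h 1; simp at this)
  simp [covM, Matrix.mulVec, dotProduct, Fin.sum_univ_three] at h1 h2
  nlinarith

lemma thetaS_sq_lt_one {θS θH θ : ℝ} (hpd : (covM θS θH θ).PosDef) : θS^2 < 1 := by
  have h1 := hpd.dotProduct_mulVec_pos (x := ![1,-1,0]) (by
    intro h; have := congrFun h 0; simp at this)
  have h2 := hpd.dotProduct_mulVec_pos (x := ![1,1,0]) (by
    intro h; have := congrFun h 0; simp at this)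
  simp [covM, Matrix.mulVec, dotProduct, Fin.sum_univ_three] at h1 h2
  nlinarith

lemma quadform (θS θH θ : ℝ) (hd : (covM θS θH θ).det ≠ 0) (v : Fin 3 → ℝ) :
    v ⬝ᵥ ((covM θS θH θ)⁻¹ *ᵥ v) =
      ((1-θ^2)*(v 0)^2 + (1-θH^2)*(v 1)^2 + (1-θS^2)*(v 2)^2
        + 2*(θ*θH-θS)*(v 0)*(v 1) + 2*(θ*θS-θH)*(v 0)*(v 2)
        + 2*(θS*θH-θ)*(v 1)*(v 2)) / (covM θS θH θ).det := by
  rw [Matrix.inv_def, Ring.inverse_eq_inv']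
  rw [det_covM] at hd ⊢
  simp [covM, Matrix.adjugate_fin_three, Matrix.mulVec, dotProduct,
    Fin.sum_univ_three, Matrix.smul_apply, det_covM]
  field_simp
  ring

lemma pdf3_factor1 {θS θH θ : ℝ} (hpd : (covM θS θH θ).PosDef) (q s h : ℝ) :
    pdf3 θS θH θ ![q,s,h] =
      gauss ((1 + 2*(θS*θH*θ) - θS^2 - θH^2 - θ^2)/(1-θ^2))
          (q - ((θS-θ*θH)/(1-θ^2) * s + (θH-θ*θS)/(1-θ^2) * h))
        * (gauss (1-θ^2) (h - θ*s) * gauss 1 s) := by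
  have hΔ : 0 < 1-θ^2 := by nlinarith [theta_sq_lt_one hpd]
  have hd : 0 < (covM θS θH θ).det := hpd.det_pos
  rw [pdf3, quadform θS θH θ hd.ne' _]
  rw [det_covM] at hd ⊢
  have hD : (0:ℝ) < 1 + 2*(θS*θH*θ) - θS^2 - θH^2 - θ^2 := hd
  simp only [Matrix.cons_val_zero, Matrix.cons_val_one, Matrix.head_cons,
    Matrix.cons_val_two, Matrix.tail_cons]
  rw [gauss, gauss, gauss, div_mul_div_comm, div_mul_div_comm,
    ← Real.exp_add, ← Real.exp_add]
  congr 1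
  · congr 1
    have := hd.ne'
    have := hΔ.ne'
    set D := 1 + 2*(θS*θH*θ) - θS^2 - θH^2 - θ^2 with hDdef
    field_simp
    rw [hDdef]
    ring
  · rw [← Real.sqrt_mul (by positivity), ← Real.sqrt_mul (by positivity)]
    congr 1
    field_simp

lemma pdf3_factor2 {θS θH θ : ℝ} (hpd : (covM θS θH θ).PosDef) (q s h : ℝ) :
    pdf3 θS θH θ ![q,s,h] =
      gauss ((1 + 2*(θS*θH*θ) - θS^2 - θH^2 - θ^2)/(1-θS^2))
          (h - ((θH-θ*θS)/(1-θS^2) * q + (θ-θS*θH)/(1-θS^2) * s))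
        * (gauss (1-θS^2) (s - θS*q) * gauss 1 q) := by
  have hΔ : 0 < 1-θS^2 := by nlinarith [thetaS_sq_lt_one hpd]
  have hd : 0 < (covM θS θH θ).det := hpd.det_pos
  rw [pdf3, quadform θS θH θ hd.ne' _]
  rw [det_covM] at hd ⊢
  simp only [Matrix.cons_val_zero, Matrix.cons_val_one, Matrix.head_cons,
    Matrix.cons_val_two, Matrix.tail_cons]
  rw [gauss, gauss, gauss, div_mul_div_comm, div_mul_div_comm,
    ← Real.exp_add, ← Real.exp_add]
  congr 1
  · congr 1
    have := hd.ne'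
    have := hΔ.ne'
    set D := 1 + 2*(θS*θH*θ) - θS^2 - θH^2 - θ^2 with hDdef
    field_simp
    rw [hDdef]
    ring
  · rw [← Real.sqrt_mul (by positivity), ← Real.sqrt_mul (by positivity)]
    congr 1
    field_simp


lemma integral_gauss_sub {v : ℝ} (hv : 0 < v) (m : ℝ) : ∫ x, gauss v (x - m) = 1 := by
  rw [MeasureTheory.integral_sub_right_eq_self (gauss v) m]
  exact integral_gauss hv

/-- master integrability of a 3-variate gaussian-type product -/
lemma master_integrable {W : ℝ → ℝ} (hWc : Continuous W)
    (hWint : Integrable (fun q => ‖W q‖ * gauss 1 q)) {v1 v2 : ℝ} (hv1 : 0 < v1) (hv2 : 0 < v2)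
    (e1 e2 e3 : ℝ) :
    Integrable (fun p : ℝ × ℝ × ℝ =>
        W p.1 * (gauss v1 (p.2.2 - (e1 * p.1 + e2 * p.2.1))
          * (gauss v2 (p.2.1 - e3 * p.1) * gauss 1 p.1)))
      (volume.prod (volume.prod volume)) := by
  set f : ℝ × ℝ × ℝ → ℝ := fun p =>
    W p.1 * (gauss v1 (p.2.2 - (e1 * p.1 + e2 * p.2.1))
      * (gauss v2 (p.2.1 - e3 * p.1) * gauss 1 p.1)) with hf
  have hmeas : AEStronglyMeasurable f (volume.prod (volume.prod volume)) := by
    apply Continuous.aestronglyMeasurable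
    fun_prop
  -- inner section integrability for every q
  have hsect : ∀ q : ℝ, Integrable (fun p : ℝ × ℝ => f (q, p)) (volume.prod volume) := by
    intro q
    have hmeas2 : AEStronglyMeasurable (fun p : ℝ × ℝ => f (q, p)) (volume.prod volume) := by
      apply Continuous.aestronglyMeasurable; fun_prop
    refine (integrable_prod_iff hmeas2).2 ⟨?_, ?_⟩
    · filter_upwards with s
      have base : Integrable (fun h => (W q * (gauss v2 (s - e3*q) * gauss 1 q))
          * gauss v1 (h - (e1*q + e2*s))) volume :=
        ((integrable_gauss' hv1).comp_sub_right _).const_mul _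
      exact base.congr (ae_of_all _ (fun h => by simp only [hf]; ring))
    · -- s ↦ ∫ h, ‖f (q,(s,h))‖ equals const * gauss v2 (s - e3 q)
      have hval : ∀ s : ℝ, (∫ h, ‖f (q, (s, h))‖)
          = (‖W q‖ * (gauss 1 q * gauss v2 (s - e3*q))) := by
        intro s
        have : ∀ h : ℝ, ‖f (q, (s, h))‖
            = (‖W q‖ * (gauss 1 q * gauss v2 (s - e3*q))) * gauss v1 (h - (e1*q + e2*s)) := by
          intro h
          simp only [hf, norm_mul, Real.norm_eq_abs,
            abs_of_nonneg (gauss_nonneg (v := v1) _), abs_of_nonneg (gauss_nonneg (v := v2) _),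
            abs_of_nonneg (gauss_nonneg (v := (1:ℝ)) _)]
          ring
        simp_rw [this]
        rw [MeasureTheory.integral_const_mul, integral_gauss_sub hv1, mul_one]
      simp_rw [hval]
      exact (((integrable_gauss' hv2).comp_sub_right _).const_mul _).const_mul _
  refine (integrable_prod_iff hmeas).2 ⟨ae_of_all _ hsect, ?_⟩
  -- q ↦ ∫ p, ‖f (q, p)‖ equals ‖W q‖ * gauss 1 q
  have hval2 : ∀ q : ℝ, (∫ p : ℝ × ℝ, ‖f (q, p)‖ ∂(volume.prod volume)) = ‖W q‖ * gauss 1 q := by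
    intro q
    rw [MeasureTheory.integral_prod _ (hsect q).norm]
    have hin : ∀ s : ℝ, (∫ h, ‖f (q, (s, h))‖)
        = (‖W q‖ * gauss 1 q) * gauss v2 (s - e3*q) := by
      intro s
      have : ∀ h : ℝ, ‖f (q, (s, h))‖
          = ((‖W q‖ * gauss 1 q) * gauss v2 (s - e3*q)) * gauss v1 (h - (e1*q + e2*s)) := by
        intro h
        simp only [hf, norm_mul, Real.norm_eq_abs,
          abs_of_nonneg (gauss_nonneg (v := v1) _), abs_of_nonneg (gauss_nonneg (v := v2) _),
          abs_of_nonneg (gauss_nonneg (v := (1:ℝ)) _)]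
        ring
      simp_rw [this]
      rw [MeasureTheory.integral_const_mul, integral_gauss_sub hv1, mul_one]
    simp_rw [hin]
    rw [MeasureTheory.integral_const_mul, integral_gauss_sub hv2, mul_one]
  exact hWint.congr (ae_of_all _ (fun q => (hval2 q).symm))

/-- move the outer integral of an iterated triple integral to the inside -/
lemma swap3 {f : ℝ → ℝ → ℝ → ℝ} {A B : Set ℝ}
    (hf : Integrable (fun p : ℝ × ℝ × ℝ => f p.1 p.2.1 p.2.2)
      (volume.prod ((volume.restrict A).prod (volume.restrict B)))) :
    ∫ q : ℝ, ∫ s in A, ∫ h in B, f q s h = ∫ s in A, ∫ h in B, ∫ q : ℝ, f q s h := by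
  set pr : Measure (ℝ × ℝ) := (volume.restrict A).prod (volume.restrict B) with hpr
  have h1 : ∫ q : ℝ, ∫ s in A, ∫ h in B, f q s h
      = ∫ q : ℝ, ∫ p : ℝ × ℝ, f q p.1 p.2 ∂pr := by
    apply integral_congr_ae
    filter_upwards [hf.prod_right_ae] with q hq
    rw [MeasureTheory.integral_prod _ hq]
  have h2 : ∫ q : ℝ, ∫ p : ℝ × ℝ, f q p.1 p.2 ∂pr = ∫ p : ℝ × ℝ, (∫ q : ℝ, f q p.1 p.2) ∂pr :=
    MeasureTheory.integral_integral_swap hf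
  have h3 : ∫ p : ℝ × ℝ, (∫ q : ℝ, f q p.1 p.2) ∂pr = ∫ s in A, ∫ h in B, ∫ q : ℝ, f q s h := by
    have hswap : Integrable (fun p : (ℝ × ℝ) × ℝ => f p.2 p.1.1 p.1.2) (pr.prod volume) := by
      have := hf.swap
      exact this
    exact MeasureTheory.integral_prod _ hswap.integral_prod_left
  rw [h1, h2, h3]


lemma integral_mul_gauss {v : ℝ} (hv : 0 < v) : ∫ x, x * gauss v x = 0 := by
  have h := MeasureTheory.integral_neg_eq_self (fun x => x * gauss v x) volume
  have h2 : ∀ x : ℝ, (-x) * gauss v (-x) = -(x * gauss v x) := by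
    intro x; simp only [gauss, neg_sq, neg_mul]
  simp_rw [h2, MeasureTheory.integral_neg] at h
  linarith [h]

lemma integral_mul_gauss_sub {v : ℝ} (hv : 0 < v) (m : ℝ) :
    ∫ x, x * gauss v (x - m) = m := by
  have h := MeasureTheory.integral_add_right_eq_self (μ := (volume : Measure ℝ)) (fun x => x * gauss v (x - m)) m
  rw [← h]
  simp only [add_sub_cancel_right]
  rw [show (fun x => (x + m) * gauss v x) = fun x => x * gauss v x + m * gauss v x from
    funext fun x => by ring]
  rw [integral_add (integrable_mul_gauss' hv) ((integrable_gauss' hv).const_mul m),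
    integral_mul_gauss hv, MeasureTheory.integral_const_mul, integral_gauss hv]
  ring

lemma integrable_mul_gauss_sub {v : ℝ} (hv : 0 < v) (m : ℝ) :
    Integrable (fun x => x * gauss v (x - m)) := by
  have : (fun x => x * gauss v (x - m))
      = fun x => (x - m) * gauss v (x - m) + m * gauss v (x - m) := funext fun x => by ring
  rw [this]
  exact ((integrable_mul_gauss' hv).comp_sub_right m).add
    (((integrable_gauss' hv).comp_sub_right m).const_mul m)

lemma integrableOn_mul_gauss_PhiBar {θ : ℝ} (hΔ : 0 < 1 - θ^2) (a b : ℝ) :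
    IntegrableOn (fun s => s * gauss 1 s * PhiBar ((b - θ*s) / Real.sqrt (1-θ^2))) (Ioi a) := by
  apply Integrable.mono' ((integrable_mul_gauss' one_pos).abs.integrableOn)
  · apply Continuous.aestronglyMeasurable
    exact ((continuous_id.mul (continuous_gauss 1)).mul (continuous_PhiBar.comp (by fun_prop)))
  · filter_upwards with s
    rw [norm_mul, norm_mul]
    have h1 : ‖PhiBar ((b - θ*s)/Real.sqrt (1-θ^2))‖ ≤ 1 := by
      rw [Real.norm_eq_abs, abs_le]
      exact ⟨by linarith [PhiBar_nonneg ((b - θ*s)/Real.sqrt (1-θ^2))], PhiBar_le_one _⟩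
    calc ‖s‖ * ‖gauss 1 s‖ * ‖PhiBar ((b - θ*s)/Real.sqrt (1-θ^2))‖
        ≤ ‖s‖ * ‖gauss 1 s‖ * 1 := mul_le_mul_of_nonneg_left h1 (by positivity)
      _ = |s * gauss 1 s| := by rw [mul_one, ← norm_mul, Real.norm_eq_abs]

lemma restrict_prod_eq {A B : Set ℝ} :
    (volume : Measure ℝ).prod (((volume : Measure ℝ).restrict A).prod
        ((volume : Measure ℝ).restrict B))
      = ((volume : Measure ℝ).prod ((volume : Measure ℝ).prod (volume : Measure ℝ))).restrict
          (Set.univ ×ˢ (A ×ˢ B)) := by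
  rw [← MeasureTheory.Measure.prod_restrict, ← MeasureTheory.Measure.prod_restrict,
    MeasureTheory.Measure.restrict_univ]

lemma phi2_eq {θ : ℝ} (hΔ : 0 < 1 - θ^2) (s h : ℝ) :
    phi2 s h θ = gauss 1 s * gauss (1-θ^2) (h - θ*s) := by
  rw [phi2, gauss, gauss, div_mul_div_comm, ← Real.exp_add]
  congr 1
  · field_simp; ring
  · rw [← Real.sqrt_mul (by positivity)]
    rw [show 2*π*1*(2*π*(1-θ^2)) = (2*π)^2 * (1-θ^2) by ring]
    rw [Real.sqrt_mul (by positivity), Real.sqrt_sq (by positivity)]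

lemma inner_q_mul {v m K : ℝ} (hv : 0 < v) :
    ∫ q : ℝ, q * (gauss v (q - m) * K) = m * K := by
  simp_rw [show ∀ q : ℝ, q * (gauss v (q - m) * K) = (q * gauss v (q - m)) * K
    from fun q => by ring]
  rw [integral_mul_const, integral_mul_gauss_sub hv]

lemma inner_q_one {v m K : ℝ} (hv : 0 < v) :
    ∫ q : ℝ, gauss v (q - m) * K = K := by
  rw [integral_mul_const, integral_gauss_sub hv, one_mul]

end TallisAux

/-- Tallis moment formula for E[Q | Q^S > τ^S, Q^H > τ^H]. -/
theorem tallis_formula (θS θH θ τS τH : ℝ) (hpd : (covM θS θH θ).PosDef) :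
    (∫ q : ℝ, ∫ s in Set.Ioi τS, ∫ h in Set.Ioi τH, q * pdf3 θS θH θ ![q, s, h]) /
      (∫ q : ℝ, ∫ s in Set.Ioi τS, ∫ h in Set.Ioi τH, pdf3 θS θH θ ![q, s, h]) =
    (θS * phi τS * PhiBar ((τH - θ*τS) / Real.sqrt (1 - θ^2)) +
      θH * phi τH * PhiBar ((τS - θ*τH) / Real.sqrt (1 - θ^2))) / PhiBar2 τS τH θ := by
  have hdel : 0 < 1 - θ^2 := by nlinarith [theta_sq_lt_one hpd]
  have hdelS : 0 < 1 - θS^2 := by nlinarith [thetaS_sq_lt_one hpd]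
  have hD : 0 < (1 + 2*(θS*θH*θ) - θS^2 - θH^2 - θ^2) := by
    have := hpd.det_pos; rwa [det_covM] at this
  have hv1 : 0 < (1 + 2*(θS*θH*θ) - θS^2 - θH^2 - θ^2)/(1-θ^2) := div_pos hD hdel
  have hv2 : 0 < (1 + 2*(θS*θH*θ) - θS^2 - θH^2 - θ^2)/(1-θS^2) := div_pos hD hdelS
  have hWidint : Integrable (fun q : ℝ => ‖q‖ * gauss 1 q) := by
    apply (integrable_mul_gauss' one_pos).abs.congr
    filter_upwards with q
    rw [abs_mul, Real.norm_eq_abs, abs_of_nonneg (gauss_nonneg q)]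
  have hmastN : Integrable (fun p : ℝ × ℝ × ℝ => p.1 * pdf3 θS θH θ ![p.1, p.2.1, p.2.2])
      (volume.prod ((volume.restrict (Ioi τS)).prod (volume.restrict (Ioi τH)))) := by
    rw [restrict_prod_eq]
    apply Integrable.restrict
    exact (master_integrable (W := fun q => q) continuous_id hWidint hv2 hdelS
      ((θH-θ*θS)/(1-θS^2)) ((θ-θS*θH)/(1-θS^2)) θS).congr
      (ae_of_all _ fun p => by simp only [pdf3_factor2 hpd])
  have hmastD : Integrable (fun p : ℝ × ℝ × ℝ => pdf3 θS θH θ ![p.1, p.2.1, p.2.2])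
      (volume.prod ((volume.restrict (Ioi τS)).prod (volume.restrict (Ioi τH)))) := by
    rw [restrict_prod_eq]
    apply Integrable.restrict
    exact (master_integrable (W := fun _ => (1:ℝ)) continuous_const
      (by simpa using (integrable_gauss' one_pos)) hv2 hdelS
      ((θH-θ*θS)/(1-θS^2)) ((θ-θS*θH)/(1-θS^2)) θS).congr
      (ae_of_all _ fun p => by simp only [pdf3_factor2 hpd, one_mul])
  have hswapN := swap3 (f := fun q s h => q * pdf3 θS θH θ ![q,s,h]) hmastN
  have hswapD := swap3 (f := fun q s h => pdf3 θS θH θ ![q,s,h]) hmastD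
  rw [hswapN, hswapD]
  -- innermost integrals
  have hinnN : ∀ s h : ℝ, (∫ q : ℝ, q * pdf3 θS θH θ ![q,s,h])
      = (((θS-θ*θH)/(1-θ^2)) * s + ((θH-θ*θS)/(1-θ^2)) * h) * (gauss (1-θ^2) (h - θ*s) * gauss 1 s) := by
    intro s h
    simp_rw [pdf3_factor1 hpd]
    exact inner_q_mul hv1
  have hinnD : ∀ s h : ℝ, (∫ q : ℝ, pdf3 θS θH θ ![q,s,h])
      = gauss (1-θ^2) (h - θ*s) * gauss 1 s := by
    intro s h
    simp_rw [pdf3_factor1 hpd]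
    exact inner_q_one hv1
  -- middle integrals
  have hmidN : ∀ s : ℝ, (∫ h in Ioi τH,
        (((θS-θ*θH)/(1-θ^2)) * s + ((θH-θ*θS)/(1-θ^2)) * h) * (gauss (1-θ^2) (h - θ*s) * gauss 1 s))
      = (((θS-θ*θH)/(1-θ^2))*s*gauss 1 s) * PhiBar ((τH - θ*s)/Real.sqrt (1-θ^2))
        + (((θH-θ*θS)/(1-θ^2))*gauss 1 s) * (θ*s*PhiBar ((τH - θ*s)/Real.sqrt (1-θ^2))
            + (1-θ^2)*gauss (1-θ^2) (τH - θ*s)) := by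
    intro s
    rw [setIntegral_congr_fun measurableSet_Ioi (g := fun h =>
      (((θS-θ*θH)/(1-θ^2))*s*gauss 1 s) * gauss (1-θ^2) (h - θ*s)
        + (((θH-θ*θS)/(1-θ^2))*gauss 1 s) * (h * gauss (1-θ^2) (h - θ*s)))
      (fun h _ => by ring)]
    rw [integral_add
      ((((integrable_gauss' hdel).comp_sub_right (θ*s)).const_mul _).integrableOn)
      (((integrable_mul_gauss_sub hdel (θ*s)).const_mul _).integrableOn)]
    rw [MeasureTheory.integral_const_mul, MeasureTheory.integral_const_mul,
      setIntegral_gauss_Ioi hdel, integral_Ioi_mul_gauss_sub hdel]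
  have hmidD : ∀ s : ℝ, (∫ h in Ioi τH, gauss (1-θ^2) (h - θ*s) * gauss 1 s)
      = gauss 1 s * PhiBar ((τH - θ*s)/Real.sqrt (1-θ^2)) := by
    intro s
    rw [setIntegral_congr_fun measurableSet_Ioi (g := fun h =>
      gauss 1 s * gauss (1-θ^2) (h - θ*s)) (fun h _ => by ring)]
    rw [MeasureTheory.integral_const_mul, setIntegral_gauss_Ioi hdel]
  -- numerator value
  have hNval : (∫ s in Ioi τS, ∫ h in Ioi τH, ∫ q : ℝ, q * pdf3 θS θH θ ![q,s,h])
      = θS * phi τS * PhiBar ((τH - θ*τS) / Real.sqrt (1-θ^2)) + θH * phi τH * PhiBar ((τS - θ*τH) / Real.sqrt (1-θ^2)) := by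
    rw [setIntegral_congr_fun measurableSet_Ioi (g := fun s =>
      (((θS-θ*θH)/(1-θ^2))*s*gauss 1 s) * PhiBar ((τH - θ*s)/Real.sqrt (1-θ^2))
        + (((θH-θ*θS)/(1-θ^2))*gauss 1 s) * (θ*s*PhiBar ((τH - θ*s)/Real.sqrt (1-θ^2))
            + (1-θ^2)*gauss (1-θ^2) (τH - θ*s)))
      (fun s _ => by
        rw [setIntegral_congr_fun measurableSet_Ioi (fun h _ => hinnN s h)]
        exact hmidN s)]
    rw [setIntegral_congr_fun measurableSet_Ioi (g := fun s =>
      (((θS-θ*θH)/(1-θ^2))+θ*((θH-θ*θS)/(1-θ^2))) * (s * gauss 1 s * PhiBar ((τH - θ*s)/Real.sqrt (1-θ^2)))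
        + (((θH-θ*θS)/(1-θ^2))*(1-θ^2)) * (gauss 1 τH * gauss (1-θ^2) (s - θ*τH)))
      (fun s _ => by dsimp only; rw [← gauss_prod hdel s τH]; ring)]
    rw [integral_add
      ((integrableOn_mul_gauss_PhiBar hdel τS τH).const_mul _)
      (((((integrable_gauss' hdel).comp_sub_right (θ*τH)).const_mul _).const_mul _).integrableOn)]
    rw [MeasureTheory.integral_const_mul, MeasureTheory.integral_const_mul,
      MeasureTheory.integral_const_mul, integral_Ioi_mul_gauss_PhiBar hdel τS τH,
      setIntegral_gauss_Ioi hdel]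
    rw [phi_eq_gauss, phi_eq_gauss]
    field_simp
    ring
  -- denominator value
  have hDval : (∫ s in Ioi τS, ∫ h in Ioi τH, ∫ q : ℝ, pdf3 θS θH θ ![q,s,h])
      = PhiBar2 τS τH θ := by
    rw [setIntegral_congr_fun measurableSet_Ioi (g := fun s =>
      gauss 1 s * PhiBar ((τH - θ*s)/Real.sqrt (1-θ^2)))
      (fun s _ => by
        rw [setIntegral_congr_fun measurableSet_Ioi (fun h _ => hinnD s h)]
        exact hmidD s)]
    rw [PhiBar2]
    refine (setIntegral_congr_fun measurableSet_Ioi (fun s _ => ?_)).symm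
    rw [setIntegral_congr_fun measurableSet_Ioi (g := fun h =>
      gauss 1 s * gauss (1-θ^2) (h - θ*s)) (fun h _ => phi2_eq hdel s h)]
    rw [MeasureTheory.integral_const_mul, setIntegral_gauss_Ioi hdel]
  rw [hNval, hDval]
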